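/- Let S be an almost unperforated Cu-semigroup and let a, b ∈ S with a soft. Then a ≤ b if and only if λ(a) ≤ λ(b) for every functional λ on S. -/

import Mathlib

open scoped ENNReal

/-- The (sequential) way-below relation: `a ≪ b` if for every increasing
sequence `f` with a supremum `s` such that `b ≤ s`, some `f n` dominates `a`. -/
def CuWayBelow {S : Type*} [Preorder S] (a b : S) : Prop :=
  ∀ f : ℕ → S, Monotone f → ∀ s : S, IsLUB (Set.range f) s → b ≤ s → ∃ n : ℕ, a ≤ f n

/-- An abstract Cu-semigroup: a positively ordered monoid satisfying the
axioms (O1)-(O4). -/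
structure IsCuSemigroup (S : Type*) [AddCommMonoid S] [PartialOrder S] : Prop where
  /-- addition is order-preserving -/
  add_le_add : ∀ a b c : S, a ≤ b → a + c ≤ b + c
  /-- `0` is the least element -/
  zero_le : ∀ a : S, 0 ≤ a
  /-- (O1) every increasing sequence has a supremum -/
  O1 : ∀ f : ℕ → S, Monotone f → ∃ s : S, IsLUB (Set.range f) s
  /-- (O2) every element is the supremum of a rapidly increasing sequence -/
  O2 : ∀ a : S, ∃ f : ℕ → S, (∀ n : ℕ, CuWayBelow (f n) (f (n + 1))) ∧ IsLUB (Set.range f) a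
  /-- (O3) way-below is additive -/
  O3 : ∀ a' a b' b : S, CuWayBelow a' a → CuWayBelow b' b → CuWayBelow (a' + b') (a + b)
  /-- (O4) suprema of increasing sequences are additive -/
  O4 : ∀ f g : ℕ → S, Monotone f → Monotone g → ∀ s t : S, IsLUB (Set.range f) s →
    IsLUB (Set.range g) t → IsLUB (Set.range (fun n => f n + g n)) (s + t)

/-- A functional on a Cu-semigroup: an additive, order-preserving map to
`[0,∞]` preserving `0` and suprema of increasing sequences. -/
structure IsCuFunctional {S : Type*} [AddCommMonoid S] [PartialOrder S] (l : S → ℝ≥0∞) : Prop where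
  map_zero : l 0 = 0
  map_add : ∀ a b : S, l (a + b) = l a + l b
  mono : ∀ a b : S, a ≤ b → l a ≤ l b
  map_lub : ∀ f : ℕ → S, Monotone f → ∀ s : S, IsLUB (Set.range f) s → l s = ⨆ n : ℕ, l (f n)

/-- An element `a` of a Cu-semigroup is soft if every `a' ≪ a` satisfies
`(n+1)•a' ≤ n•a` for some `n`. -/
def CuSoft {S : Type*} [AddCommMonoid S] [PartialOrder S] (a : S) : Prop :=
  ∀ a' : S, CuWayBelow a' a → ∃ n : ℕ, (n + 1) • a' ≤ n • a

section
variable {S : Type*} [AddCommMonoid S] [PartialOrder S]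

theorem cuwb_le {x y : S} (h : CuWayBelow x y) : x ≤ y := by
  obtain ⟨n, hn⟩ := h (fun _ => y) monotone_const y (by simpa using isLUB_singleton) le_rfl
  exact hn

theorem le_cuwb {x y z : S} (hxy : x ≤ y) (h : CuWayBelow y z) : CuWayBelow x z :=
  fun f hf s hs hzs => (h f hf s hs hzs).imp fun _ hn => hxy.trans hn

theorem cuwb_le_right {x y z : S} (h : CuWayBelow x y) (hyz : y ≤ z) : CuWayBelow x z :=
  fun f hf s hs hzs => h f hf s hs (hyz.trans hzs)

theorem zero_cuwb (hS : IsCuSemigroup S) (x : S) : CuWayBelow (0 : S) x :=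
  fun f _ _ _ _ => ⟨0, hS.zero_le _⟩

theorem rapid_mono {f : ℕ → S} (hf : ∀ n, CuWayBelow (f n) (f (n+1))) : Monotone f :=
  monotone_nat_of_le_succ fun n => cuwb_le (hf n)

theorem cuwb_interp (hS : IsCuSemigroup S) {x y : S} (h : CuWayBelow x y) :
    ∃ z, CuWayBelow x z ∧ CuWayBelow z y := by
  obtain ⟨g, hg, hlub⟩ := hS.O2 y
  obtain ⟨n, hn⟩ := h g (rapid_mono hg) y hlub le_rfl
  exact ⟨g (n+1), le_cuwb hn (hg n),
    cuwb_le_right (hg (n+1)) (hlub.1 (Set.mem_range_self (n+2)))⟩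

theorem add_le_add' (hS : IsCuSemigroup S) {x y z w : S} (h1 : x ≤ y) (h2 : z ≤ w) :
    x + z ≤ y + w := by
  calc x + z ≤ y + z := hS.add_le_add _ _ _ h1
  _ = z + y := add_comm _ _
  _ ≤ w + y := hS.add_le_add _ _ _ h2
  _ = y + w := add_comm _ _

theorem nsmul_le_nsmul_elem (hS : IsCuSemigroup S) {x y : S} (h : x ≤ y) (n : ℕ) :
    n • x ≤ n • y := by
  induction n with
  | zero => simp
  | succ k ih => rw [succ_nsmul, succ_nsmul]; exact add_le_add' hS ih h

theorem nsmul_le_nsmul_nat (hS : IsCuSemigroup S) (x : S) {m n : ℕ} (h : m ≤ n) :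
    m • x ≤ n • x := by
  obtain ⟨k, rfl⟩ := Nat.exists_eq_add_of_le h
  rw [add_nsmul]
  calc m • x = m • x + 0 := (add_zero _).symm
  _ ≤ m • x + k • x := add_le_add' hS le_rfl (hS.zero_le _)

theorem le_self_add' (hS : IsCuSemigroup S) (x y : S) : x ≤ x + y := by
  calc x = x + 0 := (add_zero _).symm
  _ ≤ x + y := add_le_add' hS le_rfl (hS.zero_le _)

end
section
variable {S : Type*} [AddCommMonoid S] [PartialOrder S]

theorem collapse (hS : IsCuSemigroup S) {b z : S} {N : ℕ} (hzN : z ≤ N • b)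
    (hk : ¬∃ k : ℕ, (k + 1) • z ≤ k • b) {p q : ℕ} (h : p • b ≤ q • b) : p ≤ q := by
  by_contra hpq
  push_neg at hpq
  rcases Nat.eq_zero_or_pos q with hq | hq
  · subst hq
    have hb0 : b ≤ 0 := by
      have h1 : 1 • b ≤ p • b := nsmul_le_nsmul_nat hS b (by omega)
      rw [one_nsmul] at h1
      simpa using h1.trans h
    have hz0 : z ≤ (0 : S) := by
      refine hzN.trans ?_
      calc N • b ≤ N • (0 : S) := nsmul_le_nsmul_elem hS hb0 N
      _ = 0 := smul_zero N
    refine hk ⟨1, ?_⟩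
    have h2 : (1 + 1) • z ≤ (0 : S) + 0 := by
      rw [add_nsmul, one_nsmul]
      exact add_le_add' hS hz0 hz0
    simpa [one_nsmul] using h2.trans ((zero_add (0:S)).le.trans (hS.zero_le b))
  · have key : ∀ j : ℕ, (p + j * (p - q)) • b ≤ q • b := by
      intro j; induction j with
      | zero => simpa using h
      | succ i ih =>
        have he : p + (i + 1) * (p - q) = (p + i * (p - q)) + (p - q) := by ring
        rw [he, add_nsmul]
        calc (p + i * (p - q)) • b + (p - q) • b ≤ q • b + (p - q) • b :=
              hS.add_le_add _ _ _ ih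
        _ = (q + (p - q)) • b := (add_nsmul b q (p - q)).symm
        _ = p • b := by congr 1; omega
        _ ≤ q • b := h
    refine hk ⟨q, ?_⟩
    have h1 : (q + 1) • z ≤ (N * (q + 1)) • b := by
      calc (q + 1) • z ≤ (q + 1) • (N • b) := nsmul_le_nsmul_elem hS hzN _
      _ = (N * (q + 1)) • b := (mul_nsmul b N (q + 1)).symm
    have hle : N * (q + 1) ≤ p + (N * (q + 1)) * (p - q) := by
      have : N * (q + 1) ≤ (N * (q + 1)) * (p - q) :=
        Nat.le_mul_of_pos_right _ (by omega)
      omega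
    exact h1.trans ((nsmul_le_nsmul_nat hS b hle).trans (key _))

theorem wit_ge_one (hS : IsCuSemigroup S) {b z : S} {N : ℕ} (hzN : z ≤ N • b)
    (hk : ¬∃ k : ℕ, (k + 1) • z ≤ k • b) {n p q : ℕ} (hn : 1 ≤ n)
    (h : n • z + p • b ≤ q • b) : p + n ≤ q := by
  have hpb : p • b ≤ n • z + p • b := by
    calc p • b = 0 + p • b := (zero_add _).symm
    _ ≤ n • z + p • b := hS.add_le_add _ _ _ (hS.zero_le _)
  have hpq : p ≤ q := collapse hS hzN hk (hpb.trans h)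
  by_contra hc
  set e := q - p with he
  have hen : e + 1 ≤ n := by omega
  have hqpe : q = p + e := by omega
  have key : ∀ m : ℕ, ((m + 1) * n) • z + p • b ≤ (p + (m + 1) * e) • b := by
    intro m; induction m with
    | zero => simpa [hqpe] using h
    | succ i ih =>
      have h1 : ((i + 2) * n) • z + p • b = n • z + (((i + 1) * n) • z + p • b) := by
        rw [← add_assoc, ← add_nsmul]
        congr 2
        ring
      rw [h1]
      calc n • z + (((i + 1) * n) • z + p • b)
          ≤ n • z + (p + (i + 1) * e) • b := add_le_add' hS le_rfl ih
      _ = (n • z + p • b) + ((i + 1) * e) • b := by rw [add_nsmul, add_assoc]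
      _ ≤ q • b + ((i + 1) * e) • b := hS.add_le_add _ _ _ h
      _ = (q + (i + 1) * e) • b := (add_nsmul b q ((i + 1) * e)).symm
      _ = (p + (i + 2) * e) • b := by congr 1; rw [hqpe]; ring
  set K := p + (p + 1) * e with hK
  refine hk ⟨K, ?_⟩
  have h1 : (K + 1) • z ≤ ((p + 1) * n) • z := by
    refine nsmul_le_nsmul_nat hS z ?_
    calc K + 1 = (p + 1) * (e + 1) := by rw [hK]; ring
    _ ≤ (p + 1) * n := Nat.mul_le_mul_left _ hen
  have h2 : ((p + 1) * n) • z ≤ ((p + 1) * n) • z + p • b := le_self_add' hS _ _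
  exact h1.trans (h2.trans (key p))

/-- A "state graph": graph of a partial additive order-preserving functional
defined on a subsemigroup of elements dominated by a multiple of `b`,
normalized at `b`. -/
def StG (b : S) (G : Set (S × ℝ)) : Prop :=
  ((0 : S), (0 : ℝ)) ∈ G ∧ (b, (1 : ℝ)) ∈ G ∧
  (∀ p ∈ G, ∀ q ∈ G, ((p.1 + q.1 : S), (p.2 + q.2 : ℝ)) ∈ G) ∧
  (∀ p ∈ G, ∀ q ∈ G, p.1 ≤ q.1 → p.2 ≤ q.2) ∧
  (∀ p ∈ G, ∃ n : ℕ, p.1 ≤ n • b)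

theorem StG.smul_mem {b : S} {G : Set (S × ℝ)} (hG : StG b G) {x : S} {r : ℝ}
    (h : (x, r) ∈ G) (n : ℕ) : ((n • x : S), (n * r : ℝ)) ∈ G := by
  induction n with
  | zero => simpa using hG.1
  | succ k ih =>
    have := hG.2.2.1 _ ih _ h
    simpa [succ_nsmul, add_mul] using this

end
section
variable {S : Type*} [AddCommMonoid S] [PartialOrder S]

theorem stg_extend (hS : IsCuSemigroup S) {b : S} {G : Set (S × ℝ)} (hG : StG b G)
    (y : S) (Ny : ℕ) (hy : y ≤ Ny • b) :
    ∃ c : ℝ,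
      (∀ t : ℝ, (∀ (n : ℕ) (w : S) (s : ℝ) (w' : S) (s' : ℝ), 1 ≤ n → (w, s) ∈ G →
        (w', s') ∈ G → n • y + w ≤ w' → t ≤ (s' - s) / n) → t ≤ c) ∧
      ∃ G' : Set (S × ℝ), StG b G' ∧ G ⊆ G' ∧ (y, c) ∈ G' := by
  classical
  obtain ⟨h0G, hbG, haddG, hmonoG, hdomG⟩ := hG
  have hGs : StG b G := ⟨h0G, hbG, haddG, hmonoG, hdomG⟩
  set U : Set ℝ := {r | ∃ (n : ℕ) (w : S) (s : ℝ) (w' : S) (s' : ℝ), 1 ≤ n ∧ (w, s) ∈ G ∧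
    (w', s') ∈ G ∧ n • y + w ≤ w' ∧ r = (s' - s) / n} with hU
  have hNyb : ((Ny • b : S), (Ny : ℝ)) ∈ G := by
    simpa using hGs.smul_mem hbG Ny
  have hUne : U.Nonempty := by
    refine ⟨((Ny : ℝ) - 0) / 1, 1, 0, 0, Ny • b, Ny, le_rfl, h0G, hNyb, ?_, by norm_num⟩
    simpa [one_nsmul] using hy
  have hUbdd : BddBelow U := by
    refine ⟨0, ?_⟩
    rintro r ⟨n, w, s, w', s', hn, hw, hw', hle, rfl⟩
    have hww' : w ≤ w' := by
      refine le_trans ?_ hle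
      calc w = 0 + w := (zero_add _).symm
      _ ≤ n • y + w := hS.add_le_add _ _ _ (hS.zero_le _)
    have hss' : s ≤ s' := hmonoG _ hw _ hw' hww'
    exact div_nonneg (by linarith) (Nat.cast_nonneg n)
  set c : ℝ := sInf U with hc
  have hcle : ∀ r ∈ U, c ≤ r := fun r hr => csInf_le hUbdd hr
  have hclb : ∀ t : ℝ, (∀ (n : ℕ) (w : S) (s : ℝ) (w' : S) (s' : ℝ), 1 ≤ n → (w, s) ∈ G →
      (w', s') ∈ G → n • y + w ≤ w' → t ≤ (s' - s) / n) → t ≤ c := by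
    intro t ht
    refine le_csInf hUne ?_
    rintro r ⟨n, w, s, w', s', hn, hw, hw', hle, rfl⟩
    exact ht n w s w' s' hn hw hw' hle
  -- key inequality
  have key : ∀ (w₁ : S) (s₁ : ℝ) (w₂ : S) (s₂ : ℝ) (n₁ n₂ : ℕ), (w₁, s₁) ∈ G →
      (w₂, s₂) ∈ G → w₁ + n₁ • y ≤ w₂ + n₂ • y → s₁ + n₁ * c ≤ s₂ + n₂ * c := by
    intro w₁ s₁ w₂ s₂ n₁ n₂ h1 h2 hle
    refine le_of_forall_pos_le_add fun ε hε => ?_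
    have hδ : (0 : ℝ) < ε / (n₂ + 1) := by positivity
    obtain ⟨r, hrU, hrlt⟩ := (csInf_lt_iff hUbdd hUne).1 (lt_add_of_pos_right c hδ)
    obtain ⟨n, w, s, w', s', hn, hw, hw', hwit, hrdef⟩ := hrU
    have hnR : (1 : ℝ) ≤ (n : ℝ) := by exact_mod_cast hn
    have hn0 : (n : ℝ) ≠ 0 := by positivity
    have hrn : s' - s = (n : ℝ) * r := by rw [hrdef]; field_simp
    have hεb : (n₂ : ℝ) * (ε / ((n₂ : ℝ) + 1)) ≤ ε := by
      rw [mul_div_assoc']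
      rw [div_le_iff₀ (by positivity)]
      nlinarith [Nat.cast_nonneg (α := ℝ) n₂]
    -- master inequality
    have e1 : n • w₁ + (n₁ * n) • y ≤ n • w₂ + (n₂ * n) • y := by
      have h' := nsmul_le_nsmul_elem hS hle n
      rw [smul_add, smul_add, ← mul_nsmul y n₁ n, ← mul_nsmul y n₂ n] at h'
      exact h'
    have e2 : (n * n₂) • y + n₂ • w ≤ n₂ • w' := by
      have h' := nsmul_le_nsmul_elem hS hwit n₂
      rw [smul_add, ← mul_nsmul y n n₂] at h'
      exact h'
    have master : (n₁ * n) • y + (n • w₁ + n₂ • w) ≤ n • w₂ + n₂ • w' := by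
      calc (n₁ * n) • y + (n • w₁ + n₂ • w) = (n • w₁ + (n₁ * n) • y) + n₂ • w := by
            rw [add_comm ((n₁ * n) • y), add_right_comm]
      _ ≤ (n • w₂ + (n₂ * n) • y) + n₂ • w := hS.add_le_add _ _ _ e1
      _ = n • w₂ + ((n * n₂) • y + n₂ • w) := by rw [mul_comm n₂ n, add_assoc]
      _ ≤ n • w₂ + n₂ • w' := add_le_add' hS le_rfl e2
    have hA : ((n • w₁ + n₂ • w : S), (n * s₁ + n₂ * s : ℝ)) ∈ G :=
      haddG _ (hGs.smul_mem h1 n) _ (hGs.smul_mem hw n₂)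
    have hB : ((n • w₂ + n₂ • w' : S), (n * s₂ + n₂ * s' : ℝ)) ∈ G :=
      haddG _ (hGs.smul_mem h2 n) _ (hGs.smul_mem hw' n₂)
    rcases Nat.eq_zero_or_pos n₁ with hn₁ | hn₁
    · subst hn₁
      have master0 : n • w₁ + n₂ • w ≤ n • w₂ + n₂ • w' := by
        simpa using master
      have hmono0 : (n : ℝ) * s₁ + n₂ * s ≤ n * s₂ + n₂ * s' := hmonoG _ hA _ hB master0
      simp only [Nat.cast_zero, zero_mul, add_zero]
      have h4 : (n : ℝ) * (s₁ - s₂) ≤ (n : ℝ) * (n₂ * c + ε) := by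
        have h5 : (n : ℝ) * (s₁ - s₂) ≤ n₂ * (s' - s) := by linarith
        have h6 : (n₂ : ℝ) * (s' - s) = (n₂ : ℝ) * n * r := by rw [hrn]; ring
        have h7 : (n₂ : ℝ) * n * r ≤ (n₂ : ℝ) * n * (c + ε / (n₂ + 1)) := by
          have : (0:ℝ) ≤ (n₂ : ℝ) * n := by positivity
          nlinarith
        have h8 : (n₂ : ℝ) * n * (c + ε / (n₂ + 1)) ≤ (n : ℝ) * (n₂ * c + ε) := by
          have h9 : (n₂ : ℝ) * (ε / (n₂ + 1)) ≤ ε := hεb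
          nlinarith [hnR]
        linarith
      nlinarith [h4, hnR]
    · have hmul : 1 ≤ n₁ * n := Nat.one_le_iff_ne_zero.2 (Nat.mul_ne_zero (by omega) (by omega))
      have hr' : ((n * s₂ + n₂ * s') - (n * s₁ + n₂ * s)) / ((n₁ * n : ℕ) : ℝ) ∈ U :=
        ⟨n₁ * n, _, _, _, _, hmul, hA, hB, master, rfl⟩
      have hcle' := hcle _ hr'
      have hn₁R : (1 : ℝ) ≤ (n₁ : ℝ) := by exact_mod_cast hn₁
      rw [le_div_iff₀ (by exact_mod_cast Nat.lt_of_lt_of_le Nat.zero_lt_one hmul)] at hcle'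
      push_cast at hcle'
      -- c * (n₁ * n) ≤ n * s₂ + n₂ * s' - (n * s₁ + n₂ * s)
      have h6 : (n₂ : ℝ) * (s' - s) = (n₂ : ℝ) * n * r := by rw [hrn]; ring
      have h7 : (n₂ : ℝ) * n * r ≤ (n₂ : ℝ) * n * (c + ε / (n₂ + 1)) := by
        have : (0:ℝ) ≤ (n₂ : ℝ) * n := by positivity
        nlinarith
      have h8 : (n₂ : ℝ) * n * (c + ε / (n₂ + 1)) ≤ (n : ℝ) * (n₂ * c + ε) := by
        nlinarith [hεb, hnR]
      have h4 : (n : ℝ) * (s₁ + n₁ * c - s₂ - n₂ * c - ε) ≤ 0 := by nlinarith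
      nlinarith [h4, hnR]
  -- the extended graph
  refine ⟨c, hclb, {p | ∃ q ∈ G, ∃ n : ℕ, p = (q.1 + n • y, q.2 + n * c)}, ?_, ?_, ?_⟩
  · refine ⟨⟨(0, 0), h0G, 0, by simp⟩, ⟨(b, 1), hbG, 0, by simp⟩, ?_, ?_, ?_⟩
    · rintro p ⟨⟨u, ru⟩, hu, nu, rfl⟩ q ⟨⟨v, rv⟩, hv, nv, rfl⟩
      refine ⟨(u + v, ru + rv), haddG _ hu _ hv, nu + nv, ?_⟩
      simp only [Prod.mk.injEq]
      refine ⟨?_, by push_cast; ring⟩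
      rw [add_nsmul]
      exact add_add_add_comm u (nu • y) v (nv • y)
    · rintro p ⟨⟨u, ru⟩, hu, nu, rfl⟩ q ⟨⟨v, rv⟩, hv, nv, rfl⟩ hle
      exact key u ru v rv nu nv hu hv hle
    · rintro p ⟨⟨u, ru⟩, hu, nu, rfl⟩
      obtain ⟨k, hk⟩ := hdomG _ hu
      refine ⟨k + Ny * nu, ?_⟩
      rw [add_nsmul]
      refine add_le_add' hS hk ?_
      calc nu • y ≤ nu • (Ny • b) := nsmul_le_nsmul_elem hS hy nu
      _ = (Ny * nu) • b := (mul_nsmul b Ny nu).symm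
  · intro p hp
    exact ⟨p, hp, 0, by simp⟩
  · exact ⟨(0, 0), h0G, 1, by simp⟩

end
section
variable {S : Type*} [AddCommMonoid S] [PartialOrder S]

theorem exists_state (hS : IsCuSemigroup S) {b z : S} {N : ℕ} (hzN : z ≤ N • b)
    (hk : ¬∃ k : ℕ, (k + 1) • z ≤ k • b) :
    ∃ f : S → ℝ≥0∞, f 0 = 0 ∧ (∀ x y : S, f (x + y) = f x + f y) ∧
      (∀ x y : S, x ≤ y → f x ≤ f y) ∧ f b ≤ 1 ∧ 1 ≤ f z := by
  classical
  -- seed graph : multiples of b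
  set Gb : Set (S × ℝ) := {p | ∃ n : ℕ, p = (n • b, (n : ℝ))} with hGbdef
  have hGb : StG b Gb := by
    refine ⟨⟨0, by simp⟩, ⟨1, by simp⟩, ?_, ?_, ?_⟩
    · rintro p ⟨n, rfl⟩ q ⟨m, rfl⟩
      exact ⟨n + m, by simp [add_nsmul]⟩
    · rintro p ⟨n, rfl⟩ q ⟨m, rfl⟩ hle
      have hle' : n • b ≤ m • b := hle
      have hnm : n ≤ m := collapse hS hzN hk hle'
      show (n : ℝ) ≤ (m : ℝ)
      exact_mod_cast hnm
    · rintro p ⟨n, rfl⟩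
      exact ⟨n, le_rfl⟩
  -- extend by z
  obtain ⟨c, hclb, G₁, hG₁, hGbG₁, hzG₁⟩ := stg_extend hS hGb z N hzN
  have hc1 : (1 : ℝ) ≤ c := by
    refine hclb 1 ?_
    rintro n w s w' s' hn ⟨p, hp⟩ ⟨q, hq⟩ hle
    rw [Prod.mk.injEq] at hp hq
    obtain ⟨hp1, hp2⟩ := hp
    obtain ⟨hq1, hq2⟩ := hq
    subst hp1; subst hp2; subst hq1; subst hq2
    have hw : p + n ≤ q := wit_ge_one hS hzN hk hn hle
    rw [le_div_iff₀ (by exact_mod_cast hn)]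
    have : (p : ℝ) + n ≤ q := by exact_mod_cast hw
    linarith
  -- Zorn's lemma
  set A : Set (Set (S × ℝ)) := {G | StG b G ∧ G₁ ⊆ G} with hA
  have hchain : ∀ C ⊆ A, IsChain (fun x1 x2 => x1 ⊆ x2) C → C.Nonempty →
      ∃ ub ∈ A, ∀ s ∈ C, s ⊆ ub := by
    intro C hCA hCchain ⟨G₀, hG₀⟩
    have hG₀A : G₀ ∈ A := hCA hG₀
    refine ⟨⋃₀ C, ⟨⟨?_, ?_, ?_, ?_, ?_⟩, ?_⟩, fun s hs => Set.subset_sUnion_of_mem hs⟩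
    · exact ⟨G₀, hG₀, hG₀A.1.1⟩
    · exact ⟨G₀, hG₀, hG₀A.1.2.1⟩
    · rintro p ⟨Gp, hGp, hpGp⟩ q ⟨Gq, hGq, hqGq⟩
      rcases hCchain.total hGp hGq with hsub | hsub
      · exact ⟨Gq, hGq, (hCA hGq).1.2.2.1 _ (hsub hpGp) _ hqGq⟩
      · exact ⟨Gp, hGp, (hCA hGp).1.2.2.1 _ hpGp _ (hsub hqGq)⟩
    · rintro p ⟨Gp, hGp, hpGp⟩ q ⟨Gq, hGq, hqGq⟩ hle
      rcases hCchain.total hGp hGq with hsub | hsub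
      · exact (hCA hGq).1.2.2.2.1 _ (hsub hpGp) _ hqGq hle
      · exact (hCA hGp).1.2.2.2.1 _ hpGp _ (hsub hqGq) hle
    · rintro p ⟨Gp, hGp, hpGp⟩
      exact (hCA hGp).1.2.2.2.2 _ hpGp
    · exact (hG₀A.2).trans (Set.subset_sUnion_of_mem hG₀)
  obtain ⟨M, hG₁M, hMA, hMmax⟩ := zorn_subset_nonempty A hchain G₁ ⟨hG₁, subset_rfl⟩
  have hMst : StG b M := hMA.1
  -- maximal domain
  have hdomfull : ∀ x : S, (∃ n : ℕ, x ≤ n • b) → ∃ r : ℝ, (x, r) ∈ M := by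
    rintro x ⟨n, hx⟩
    by_contra hno
    obtain ⟨c', _, M', hM', hMM', hxM'⟩ := stg_extend hS hMst x n hx
    have hM'A : M' ∈ A := ⟨hM', hMA.2.trans hMM'⟩
    exact hno ⟨c', hMmax hM'A hMM' hxM'⟩
  have hnonneg : ∀ {x : S} {r : ℝ}, (x, r) ∈ M → 0 ≤ r := by
    intro x r hr
    exact hMst.2.2.2.1 _ hMst.1 _ hr (hS.zero_le x)
  -- define the functional
  set f : S → ℝ≥0∞ := fun x =>
    if h : ∃ r : ℝ, (x, r) ∈ M then ENNReal.ofReal h.choose else ⊤ with hfdef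
  have hfval : ∀ {x : S} {r : ℝ}, (x, r) ∈ M → f x = ENNReal.ofReal r := by
    intro x r hr
    have hex : ∃ r : ℝ, (x, r) ∈ M := ⟨r, hr⟩
    have h1 : hex.choose = r := by
      have hc := hex.choose_spec
      exact le_antisymm (hMst.2.2.2.1 _ hc _ hr le_rfl) (hMst.2.2.2.1 _ hr _ hc le_rfl)
    simp only [hfdef, dif_pos hex, h1]
  have hftop : ∀ {x : S}, (¬∃ n : ℕ, x ≤ n • b) → f x = ⊤ := by
    intro x hx
    have : ¬∃ r : ℝ, (x, r) ∈ M := by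
      rintro ⟨r, hr⟩
      exact hx (hMst.2.2.2.2 _ hr)
    simp only [hfdef, dif_neg this]
  refine ⟨f, ?_, ?_, ?_, ?_, ?_⟩
  · rw [hfval hMst.1]; simp
  · intro x y
    by_cases hx : ∃ n : ℕ, x ≤ n • b
    · by_cases hy : ∃ n : ℕ, y ≤ n • b
      · obtain ⟨r, hr⟩ := hdomfull x hx
        obtain ⟨s, hs⟩ := hdomfull y hy
        have hxy : ((x + y : S), (r + s : ℝ)) ∈ M := hMst.2.2.1 _ hr _ hs
        rw [hfval hr, hfval hs, hfval hxy, ENNReal.ofReal_add (hnonneg hr) (hnonneg hs)]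
      · have h1 : f y = ⊤ := hftop hy
        have h2 : f (x + y) = ⊤ := by
          refine hftop ?_
          rintro ⟨n, hn⟩
          exact hy ⟨n, le_trans (by
            calc y = 0 + y := (zero_add _).symm
            _ ≤ x + y := hS.add_le_add _ _ _ (hS.zero_le _)) hn⟩
        rw [h1, h2]; simp
    · have h1 : f x = ⊤ := hftop hx
      have h2 : f (x + y) = ⊤ := by
        refine hftop ?_
        rintro ⟨n, hn⟩
        exact hx ⟨n, (le_self_add' hS x y).trans hn⟩
      rw [h1, h2]; simp
  · intro x y hxy
    by_cases hy : ∃ n : ℕ, y ≤ n • b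
    · obtain ⟨n, hn⟩ := hy
      obtain ⟨s, hs⟩ := hdomfull y ⟨n, hn⟩
      obtain ⟨r, hr⟩ := hdomfull x ⟨n, hxy.trans hn⟩
      rw [hfval hr, hfval hs]
      exact ENNReal.ofReal_le_ofReal (hMst.2.2.2.1 _ hr _ hs hxy)
    · rw [hftop hy]; exact le_top
  · rw [hfval hMst.2.1]; simp
  · have hzM : (z, c) ∈ M := hG₁M hzG₁
    rw [hfval hzM]
    calc (1 : ℝ≥0∞) = ENNReal.ofReal 1 := ENNReal.ofReal_one.symm
    _ ≤ ENNReal.ofReal c := ENNReal.ofReal_le_ofReal hc1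

end
section
variable {S : Type*} [AddCommMonoid S] [PartialOrder S]

theorem lscify (hS : IsCuSemigroup S) (f : S → ℝ≥0∞) (h0 : f 0 = 0)
    (hadd : ∀ x y : S, f (x + y) = f x + f y) (hmono : ∀ x y : S, x ≤ y → f x ≤ f y) :
    ∃ lam : S → ℝ≥0∞, IsCuFunctional lam ∧ (∀ x : S, lam x ≤ f x) ∧
      (∀ x' x : S, CuWayBelow x' x → f x' ≤ lam x) := by
  set lam : S → ℝ≥0∞ := fun x => ⨆ p : {z : S // CuWayBelow z x}, f p.1 with hlam
  have hub : ∀ x' x : S, CuWayBelow x' x → f x' ≤ lam x := fun x' x h =>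
    le_iSup (fun p : {z : S // CuWayBelow z x} => f p.1) ⟨x', h⟩
  have hle : ∀ x : S, lam x ≤ f x := fun x => iSup_le fun p => hmono _ _ (cuwb_le p.2)
  have hmonol : ∀ x y : S, x ≤ y → lam x ≤ lam y := fun x y h =>
    iSup_le fun p => hub _ _ (cuwb_le_right p.2 h)
  refine ⟨lam, ⟨?_, ?_, hmonol, ?_⟩, hle, hub⟩
  · exact le_antisymm ((hle 0).trans_eq h0) zero_le
  · intro x y
    refine le_antisymm ?_ ?_
    · refine iSup_le fun p => ?_
      obtain ⟨z, hz⟩ := p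
      obtain ⟨gx, hgx, hlubx⟩ := hS.O2 x
      obtain ⟨gy, hgy, hluby⟩ := hS.O2 y
      have hmx := rapid_mono hgx
      have hmy := rapid_mono hgy
      have hlubsum := hS.O4 gx gy hmx hmy x y hlubx hluby
      obtain ⟨n, hn⟩ := hz _ (fun i j hij => add_le_add' hS (hmx hij) (hmy hij)) _
        hlubsum le_rfl
      calc f z ≤ f (gx n + gy n) := hmono _ _ hn
      _ = f (gx n) + f (gy n) := hadd _ _
      _ ≤ lam x + lam y :=
          add_le_add (hub _ _ (cuwb_le_right (hgx n) (hlubx.1 (Set.mem_range_self (n+1)))))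
            (hub _ _ (cuwb_le_right (hgy n) (hluby.1 (Set.mem_range_self (n+1)))))
    · have hnex : Nonempty {z : S // CuWayBelow z x} := ⟨⟨0, zero_cuwb hS x⟩⟩
      have hney : Nonempty {z : S // CuWayBelow z y} := ⟨⟨0, zero_cuwb hS y⟩⟩
      rw [show lam x + lam y = (⨆ p : {z : S // CuWayBelow z x}, f p.1) + lam y from rfl,
        ENNReal.iSup_add]
      refine iSup_le fun p => ?_
      rw [show lam y = ⨆ q : {z : S // CuWayBelow z y}, f q.1 from rfl, ENNReal.add_iSup]
      refine iSup_le fun q => ?_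
      rw [← hadd]
      exact hub _ _ (hS.O3 _ x _ y p.2 q.2)
  · intro g hg s hlub
    refine le_antisymm ?_ (iSup_le fun n => hmonol _ _ (hlub.1 (Set.mem_range_self n)))
    refine iSup_le fun p => ?_
    obtain ⟨z, hz⟩ := p
    obtain ⟨z', hzz', hz's⟩ := cuwb_interp hS hz
    obtain ⟨n, hn⟩ := hz's g hg s hlub le_rfl
    exact le_trans (hub _ _ (cuwb_le_right hzz' hn)) (le_iSup (fun n => lam (g n)) n)

end
/-- Let `S` be an almost unperforated Cu-semigroup and let
`a b ∈ S` with `a` soft.  Then `a ≤ b` iff `λ a ≤ λ b` for every functional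
`λ` on `S`. -/
theorem stmt14 {S : Type*} [AddCommMonoid S] [PartialOrder S]
    (hS : IsCuSemigroup S)
    (hau : ∀ a b : S, (∃ k : ℕ, (k + 1) • a ≤ k • b) → a ≤ b)
    (a b : S) (ha : CuSoft a) :
    a ≤ b ↔ ∀ lam : S → ℝ≥0∞, IsCuFunctional lam → lam a ≤ lam b := by
  classical
  constructor
  · intro hab lam hlam
    exact hlam.mono a b hab
  · intro hyp
    obtain ⟨g, hg, hlub⟩ := hS.O2 a
    refine hlub.2 ?_
    rintro _ ⟨n, rfl⟩
    have hgna : CuWayBelow (g n) a :=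
      cuwb_le_right (hg n) (hlub.1 (Set.mem_range_self (n + 1)))
    refine hau (g n) b ?_
    by_contra hk
    -- Step 1: `g n` is dominated by a multiple of `b`.
    have hJ : ∃ N : ℕ, g n ≤ N • b := by
      set J : S → ℝ≥0∞ := fun x => if ∃ N : ℕ, x ≤ N • b then 0 else ⊤ with hJdef
      have hJ0 : J 0 = 0 := if_pos ⟨0, by simp⟩
      have hJmono : ∀ x y : S, x ≤ y → J x ≤ J y := by
        intro x y hxy
        by_cases hy : ∃ N : ℕ, y ≤ N • b
        · obtain ⟨N, hN⟩ := hy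
          rw [hJdef]; simp only []
          rw [if_pos ⟨N, hxy.trans hN⟩, if_pos ⟨N, hN⟩]
        · rw [hJdef]; simp only []
          rw [if_neg hy]; exact le_top
      have hJadd : ∀ x y : S, J (x + y) = J x + J y := by
        intro x y
        by_cases hx : ∃ N : ℕ, x ≤ N • b
        · by_cases hy : ∃ N : ℕ, y ≤ N • b
          · obtain ⟨Nx, hNx⟩ := hx
            obtain ⟨Ny, hNy⟩ := hy
            have hxy : x + y ≤ (Nx + Ny) • b := by
              rw [add_nsmul]; exact add_le_add' hS hNx hNy
            rw [hJdef]; simp only []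
            rw [if_pos ⟨_, hxy⟩, if_pos ⟨Nx, hNx⟩, if_pos ⟨Ny, hNy⟩, add_zero]
          · have h2 : ¬∃ N : ℕ, x + y ≤ N • b := by
              rintro ⟨N, hN⟩
              refine hy ⟨N, le_trans ?_ hN⟩
              calc y = 0 + y := (zero_add _).symm
              _ ≤ x + y := hS.add_le_add _ _ _ (hS.zero_le _)
            rw [hJdef]; simp only []
            rw [if_neg h2, if_neg hy]; simp
        · have h2 : ¬∃ N : ℕ, x + y ≤ N • b := by
            rintro ⟨N, hN⟩
            exact hx ⟨N, (le_self_add' hS x y).trans hN⟩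
          rw [hJdef]; simp only []
          rw [if_neg h2, if_neg hx]; simp
      obtain ⟨lam, hlamf, hlamle, hlamge⟩ := lscify hS J hJ0 hJadd hJmono
      have hlb : lam b = 0 := le_antisymm ((hlamle b).trans_eq (if_pos ⟨1, by simp⟩))
        zero_le
      have hla : lam a = 0 := le_antisymm ((hyp lam hlamf).trans hlb.le) zero_le
      have hJle := hlamge (g n) a hgna
      by_contra hN
      rw [hla] at hJle
      rw [hJdef] at hJle; simp only [] at hJle
      rw [if_neg hN] at hJle
      simp at hJle
    obtain ⟨N, hN⟩ := hJ
    -- Step 2: softness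
    have ha1 : CuWayBelow (g (n + 1)) a :=
      cuwb_le_right (hg (n + 1)) (hlub.1 (Set.mem_range_self (n + 2)))
    obtain ⟨m, hm⟩ := ha (g (n + 1)) ha1
    -- Step 3: the separating functional
    obtain ⟨f, hf0, hfadd, hfmono, hfb, hfz⟩ := exists_state hS hN hk
    obtain ⟨lam, hlamf, hlamle, hlamge⟩ := lscify hS f hf0 hfadd hfmono
    have hlamb : lam b ≤ 1 := (hlamle b).trans hfb
    have hlama : lam a ≤ 1 := (hyp lam hlamf).trans hlamb
    have hlam1 : (1 : ℝ≥0∞) ≤ lam (g (n + 1)) := hfz.trans (hlamge (g n) (g (n + 1)) (hg n))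
    have hsm : ∀ (k : ℕ) (x : S), lam (k • x) = k * lam x := by
      intro k x
      induction k with
      | zero => simpa using hlamf.map_zero
      | succ i ih =>
        rw [succ_nsmul, hlamf.map_add, ih]
        push_cast
        ring
    have hcon := hlamf.mono _ _ hm
    rw [hsm, hsm] at hcon
    push_cast at hcon
    have h1 : ((m : ℝ≥0∞) + 1) ≤ ((m : ℝ≥0∞) + 1) * lam (g (n + 1)) := by
      nth_rewrite 1 [← mul_one ((m : ℝ≥0∞) + 1)]
      exact mul_le_mul_right hlam1 _
    have h2 : (m : ℝ≥0∞) * lam a ≤ m := by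
      calc (m : ℝ≥0∞) * lam a ≤ m * 1 := mul_le_mul_right hlama m
      _ = m := mul_one _
    have hfin : ((m : ℝ≥0∞) + 1) ≤ m := h1.trans (hcon.trans h2)
    have hlt : (m : ℝ≥0∞) < (m : ℝ≥0∞) + 1 :=
      ENNReal.lt_add_right (ENNReal.natCast_ne_top m) one_ne_zero
    exact hlt.not_ge hfin
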